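/- Let p be a prime, K a field of characteristic p, and α, β ∈ K such that α·β = ι(c₀) for some c₀ ∈ ZMod p, where ι : ZMod p → K is the canonical ring homomorphism. Let δ ≤ p be a natural number and let m, s be natural numbers with m < δ and s < δ such that 1 + m·s·c₀ ≠ 0 in ZMod p. Set t := s·(1 + m·s·c₀)⁻¹ ∈ ZMod p and suppose val(t) > p − δ. Then n := p − val(t) satisfies n < δ, and for every natural number r the matrix A₀^r · A₁^s · A₀^m · A₁^n has (2,1) entry equal to 0, i.e., it is upper triangular. (Here val(t) ∈ {0,…,p−1} denotes the canonical representative of t ∈ ZMod p.) -/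

import Mathlib

/-- Structured search for short messages `A₀^r A₁^s` extendable to an upper
triangular hash, when `α·β` comes from the prime field via the canonical map
`ι = ZMod.castHom (dvd_refl p) K`. Here `A₀ = !![1, α; 0, 1]`, `A₁ = !![1, 0; β, 1]`. -/
theorem upper_triangular_short_message (p : ℕ) [Fact p.Prime]
    (K : Type*) [Field K] [CharP K p] (α β : K) (c₀ : ZMod p)
    (hab : α * β = ZMod.castHom (dvd_refl p) K c₀)
    (δ : ℕ) (hδ : δ ≤ p) (m s : ℕ) (hm : m < δ) (hs : s < δ)
    (hx : (1 : ZMod p) + (m : ZMod p) * (s : ZMod p) * c₀ ≠ 0)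
    (ht : p - δ < ((s : ZMod p) * ((1 : ZMod p) + (m : ZMod p) * (s : ZMod p) * c₀)⁻¹).val) :
    p - ((s : ZMod p) * ((1 : ZMod p) + (m : ZMod p) * (s : ZMod p) * c₀)⁻¹).val < δ ∧
    ∀ r : ℕ,
      ((!![1, α; 0, 1] : Matrix (Fin 2) (Fin 2) K) ^ r *
          (!![1, 0; β, 1] : Matrix (Fin 2) (Fin 2) K) ^ s *
          (!![1, α; 0, 1] : Matrix (Fin 2) (Fin 2) K) ^ m *
          (!![1, 0; β, 1] : Matrix (Fin 2) (Fin 2) K) ^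
            (p - ((s : ZMod p) * ((1 : ZMod p) + (m : ZMod p) * (s : ZMod p) * c₀)⁻¹).val))
        1 0 = 0 := by
  set t : ZMod p := (s : ZMod p) * ((1 : ZMod p) + (m : ZMod p) * (s : ZMod p) * c₀)⁻¹ with htdef
  have hvlt : t.val < p := ZMod.val_lt t
  refine ⟨by omega, ?_⟩
  intro r
  have hA0 : ∀ k : ℕ, (!![1, α; 0, 1] : Matrix (Fin 2) (Fin 2) K) ^ k
      = !![1, (k : K) * α; 0, 1] := by
    intro k
    induction k with
    | zero => simp [Matrix.one_fin_two]
    | succ k ih =>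
      rw [pow_succ, ih, Matrix.mul_fin_two]
      push_cast
      congr 1 <;> ring
  have hA1 : ∀ k : ℕ, (!![1, 0; β, 1] : Matrix (Fin 2) (Fin 2) K) ^ k
      = !![1, 0; (k : K) * β, 1] := by
    intro k
    induction k with
    | zero => simp [Matrix.one_fin_two]
    | succ k ih =>
      rw [pow_succ, ih, Matrix.mul_fin_two]
      push_cast
      congr 1 <;> ring
  set n := p - t.val with hndef
  set ι := ZMod.castHom (dvd_refl p) K with hι
  have hnz : ((n : ℕ) : ZMod p) = -t := by
    rw [hndef, Nat.cast_sub hvlt.le]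
    simp [ZMod.natCast_val, ZMod.cast_id]
  have hncast : (n : K) = ι (-t) := by
    rw [← hnz]; simp
  have hz : (s : ZMod p) + (-t) * (1 + (m : ZMod p) * (s : ZMod p) * c₀) = 0 := by
    rw [htdef]
    rw [neg_mul, mul_assoc, inv_mul_cancel₀ hx, mul_one, add_neg_cancel]
  have key : (s : K) + (n : K) * (1 + (m : K) * (s : K) * (α * β)) = 0 := by
    rw [hab, hncast]
    have h2 := congrArg ι hz
    simpa [map_add, map_mul, map_neg, map_natCast] using h2
  rw [hA0 r, hA0 m, hA1 s, hA1 n, Matrix.mul_fin_two, Matrix.mul_fin_two, Matrix.mul_fin_two]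
  have : ∀ a b c d : K, (!![a, b; c, d] : Matrix (Fin 2) (Fin 2) K) 1 0 = c := by
    intro a b c d; rfl
  rw [this]
  linear_combination β * key
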